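/- arXiv:1312.3098 — 6 statements merged into one kernel-verified Lean document; each statement's English description precedes it below -/
import Mathlib

section
/- Let Γ be a countably infinite discrete amenable group and f ∈ ℤΓ. Then f is a right zero-divisor in ℤΓ if and only if f is a left zero-divisor in ℤΓ. -/
open Filter
open scoped Classical

/-- A Følner sequence for a countable discrete group: a sequence of nonempty finite subsets
that is asymptotically invariant under left translation. Its existence characterizes
amenability for countable discrete groups. -/

def IsFolnerSeq {Γ : Type*} [Group Γ] (F : ℕ → Finset Γ) : Prop :=
  (∀ n, (F n).Nonempty) ∧
    ∀ γ : Γ, Tendsto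
      (fun n => (((F n).image (fun δ => γ * δ) \ F n).card : ℝ) / (F n).card)
      atTop (nhds 0)

set_option maxHeartbeats 1000000

open Module Matrix

section Aux

variable {Γ : Type*} [Group Γ]

instance monoidAlgebraCoeFun {R M : Type*} [Semiring R] :
    CoeFun (MonoidAlgebra R M) (fun _ => M → R) := ⟨fun x => x.coeff⟩

abbrev MonoidAlgebra.support {R M : Type*} [Semiring R] (x : MonoidAlgebra R M) : Finset M :=
  x.coeff.support

noncomputable def iota {R : Type*} [Semiring R] (f : MonoidAlgebra R Γ) : MonoidAlgebra R Γ :=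
  ⟨Finsupp.equivMapDomain (Equiv.inv Γ) f.coeff⟩

lemma iota_apply {R : Type*} [Semiring R] (f : MonoidAlgebra R Γ) (x : Γ) :
    iota f x = f x⁻¹ := rfl

lemma iota_iota {R : Type*} [Semiring R] (f : MonoidAlgebra R Γ) : iota (iota f) = f := by
  ext x; simp [iota_apply]

lemma iota_eq_zero_iff {R : Type*} [Semiring R] (f : MonoidAlgebra R Γ) :
    iota f = 0 ↔ f = 0 := by
  constructor
  · intro h; ext x
    have hx : iota f x⁻¹ = (0 : MonoidAlgebra R Γ) x⁻¹ := by rw [h]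
    simpa [iota_apply] using hx
  · rintro rfl; ext x; simp [iota_apply]

lemma mulApplyR {R : Type*} [Semiring R] (h u : MonoidAlgebra R Γ) (x : Γ) :
    (h * u) x = ∑ y ∈ u.support, h (x * y⁻¹) * u y := by
  conv_lhs => rw [← MonoidAlgebra.sum_coeff_single u]
  rw [Finsupp.sum, Finset.mul_sum]
  rw [MonoidAlgebra.coeff_sum, Finsupp.finset_sum_apply]
  exact Finset.sum_congr rfl fun y _ => by rw [MonoidAlgebra.coeff_mul_single_apply]

lemma mulApplyL {R : Type*} [Semiring R] (h u : MonoidAlgebra R Γ) (x : Γ) :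
    (h * u) x = ∑ z ∈ h.support, h z * u (z⁻¹ * x) := by
  conv_lhs => rw [← MonoidAlgebra.sum_coeff_single h]
  rw [Finsupp.sum, Finset.sum_mul]
  rw [MonoidAlgebra.coeff_sum, Finsupp.finset_sum_apply]
  exact Finset.sum_congr rfl fun z _ => by rw [MonoidAlgebra.coeff_single_mul_apply]

lemma iota_support {R : Type*} [Semiring R] (f : MonoidAlgebra R Γ) :
    (iota f).support = f.support.map (Equiv.inv Γ).toEmbedding := rfl

lemma iota_mul {R : Type*} [CommSemiring R] (f g : MonoidAlgebra R Γ) :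
    iota (f * g) = iota g * iota f := by
  ext x
  rw [iota_apply, mulApplyL, mulApplyR, iota_support, Finset.sum_map]
  refine Finset.sum_congr rfl fun z hz => ?_
  simp only [Equiv.toEmbedding_apply, Equiv.inv_apply, iota_apply]
  rw [mul_comm]
  congr 2
  · rw [_root_.mul_inv_rev]; simp
  · simp

lemma greedy (P : Finset Γ) (h1 : (1:Γ) ∈ P) (D : Finset Γ) :
    ∃ (k : ℕ) (d : Fin k → Γ),
      D.card ≤ k * P.card ∧ (∀ i, d i ∈ D) ∧
      ∀ i j : Fin k, j < i → d i ∉ P.image (· * d j) := by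
  induction D using Finset.strongInduction with
  | _ D ih =>
    by_cases hD : D.Nonempty
    · obtain ⟨δ, hδ⟩ := hD
      set D' := D \ P.image (· * δ) with hD'
      have hss : D' ⊂ D := by
        refine Finset.ssubset_iff_of_subset (Finset.sdiff_subset) |>.2 ⟨δ, hδ, ?_⟩
        simp only [hD', Finset.mem_sdiff, not_and, not_not]
        intro _
        exact Finset.mem_image.2 ⟨1, h1, one_mul δ⟩
      obtain ⟨k, d, hcard, hmem, havoid⟩ := ih D' hss
      refine ⟨k+1, Fin.cons δ d, ?_, ?_, ?_⟩
      · have h1' : D.card ≤ D'.card + (P.image (· * δ)).card := by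
          have : D ⊆ D' ∪ P.image (· * δ) := by
            intro x hx
            by_cases h : x ∈ P.image (· * δ)
            · exact Finset.mem_union_right _ h
            · exact Finset.mem_union_left _ (Finset.mem_sdiff.2 ⟨hx, h⟩)
          calc D.card ≤ (D' ∪ P.image (· * δ)).card := Finset.card_le_card this
            _ ≤ _ := Finset.card_union_le _ _
        have h2' : (P.image (· * δ)).card ≤ P.card := Finset.card_image_le
        calc D.card ≤ D'.card + P.card := by omega
          _ ≤ k * P.card + P.card := by omega
          _ = (k+1) * P.card := by ring
      · intro i
        refine Fin.cases ?_ ?_ i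
        · simpa using hδ
        · intro i'; simpa using Finset.sdiff_subset (hmem i')
      · intro i j hij
        refine Fin.cases ?_ ?_ i hij
        · intro h; exact absurd h (Fin.not_lt_zero j)
        · intro i' hji'
          refine Fin.cases ?_ ?_ j hji'
          · intro _
            simpa using (Finset.mem_sdiff.1 (hmem i')).2
          · intro j' hj'
            have : j' < i' := by
              simpa using hj'
            simpa using havoid i' j' this
    · refine ⟨0, Fin.elim0, ?_, fun i => i.elim0, fun i => i.elim0⟩
      simp [Finset.not_nonempty_iff_eq_empty.1 hD]

lemma indep (g : MonoidAlgebra ℚ Γ) (s₀ : Γ) (hs₀ : s₀ ∈ g.support)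
    {k : ℕ} (d : Fin k → Γ)
    (havoid : ∀ i j : Fin k, j < i →
      d i ∉ (g.support.image (fun t => s₀⁻¹ * t)).image (· * d j)) :
    LinearIndependent ℚ (fun i => g * MonoidAlgebra.single (d i) (1:ℚ)) := by
  rw [linearIndependent_iff']
  intro s
  induction s using Finset.strongInduction with
  | _ s ih =>
    intro c hsum i hi
    have hne : s.Nonempty := ⟨i, hi⟩
    set i₀ := s.max' hne with hi₀
    have hi₀mem : i₀ ∈ s := s.max'_mem hne
    set p := s₀ * d i₀ with hp
    have heval : ∀ j, (g * MonoidAlgebra.single (d j) (1:ℚ)) p = g (p * (d j)⁻¹) := by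
      intro j; rw [MonoidAlgebra.coeff_mul_single_apply, mul_one]
    have hzero : ∀ j ∈ s, j ≠ i₀ → (g * MonoidAlgebra.single (d j) (1:ℚ)) p = 0 := by
      intro j hj hji
      rw [heval]
      by_contra h0
      have ht : p * (d j)⁻¹ ∈ g.support := Finsupp.mem_support_iff.2 h0
      have hji' : j < i₀ := lt_of_le_of_ne (s.le_max' j hj) hji
      refine havoid i₀ j hji' (Finset.mem_image.2 ⟨s₀⁻¹ * (p * (d j)⁻¹),
        Finset.mem_image.2 ⟨_, ht, rfl⟩, ?_⟩)
      rw [hp]; group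
    have h0 : ∑ j ∈ s, c j * (g * MonoidAlgebra.single (d j) (1:ℚ)) p = 0 := by
      have h2 : (∑ i ∈ s, c i • (g * MonoidAlgebra.single (d i) (1:ℚ))).coeff p = 0 := by
        rw [hsum]; rfl
      rw [MonoidAlgebra.coeff_sum, Finsupp.finset_sum_apply] at h2
      exact h2
    have hsimp : ∑ j ∈ s, c j * (g * MonoidAlgebra.single (d j) (1:ℚ)) p = c i₀ * g s₀ := by
      rw [Finset.sum_eq_single i₀]
      · rw [heval i₀]; congr 2; rw [hp, mul_inv_cancel_right]
      · intro j hj hji; rw [hzero j hj hji, mul_zero]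
      · intro h; exact absurd hi₀mem h
    have hc0 : c i₀ = 0 := by
      have := hsimp ▸ h0
      rcases mul_eq_zero.1 this with h | h
      · exact h
      · exact absurd h (Finsupp.mem_support_iff.1 hs₀)
    by_cases hii : i = i₀
    · rw [hii]; exact hc0
    · refine ih (s.erase i₀) (Finset.erase_ssubset hi₀mem) c ?_ i
        (Finset.mem_erase.2 ⟨hii, hi⟩)
      rw [Finset.sum_erase_eq_sub hi₀mem, hsum, hc0, zero_smul, sub_zero]

lemma cardBound (f : MonoidAlgebra ℚ Γ)
    (hinj : ∀ u : MonoidAlgebra ℚ Γ, iota f * u = 0 → u = 0)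
    (E T : Finset Γ)
    (hT : ∀ s ∈ (iota f).support, ∀ y ∈ E, s * y ∈ T)
    {k : ℕ} (v : Fin k → MonoidAlgebra ℚ Γ)
    (hsupp : ∀ i, (v i).support ⊆ T) (hker : ∀ i, f * v i = 0)
    (hind : LinearIndependent ℚ v) : k + E.card ≤ T.card := by
  set M : Matrix ↥E ↥T ℚ := fun y x => f ((y:Γ) * (x:Γ)⁻¹) with hM
  -- Step 1: transpose has trivial kernel
  have hMt : LinearMap.ker (Mᵀ.mulVecLin) = ⊥ := by
    rw [LinearMap.ker_eq_bot']
    intro w hw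
    set W : MonoidAlgebra ℚ Γ := ∑ y : ↥E, MonoidAlgebra.single ((y:Γ)) (w y) with hWdef
    have hWx : ∀ x : Γ, (iota f * W) x = ∑ y : ↥E, iota f (x * (y:Γ)⁻¹) * w y := by
      intro x
      have h1 : iota f * W = ∑ y : ↥E, iota f * MonoidAlgebra.single ((y:Γ)) (w y) := by
        rw [hWdef, Finset.mul_sum]
      rw [h1]
      have h2 : (∑ y : ↥E, (iota f * MonoidAlgebra.single ((y:Γ)) (w y))).coeff x
          = ∑ y : ↥E, (iota f * MonoidAlgebra.single ((y:Γ)) (w y)).coeff x := by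
        rw [MonoidAlgebra.coeff_sum, Finsupp.finset_sum_apply]
      rw [h2]
      exact Finset.sum_congr rfl fun y _ => by rw [MonoidAlgebra.coeff_mul_single_apply]
    have hfW : iota f * W = 0 := by
      ext x
      rw [hWx]
      show _ = (0 : Γ → ℚ) x
      by_cases hx : x ∈ T
      · have h3 := congrFun hw (⟨x, hx⟩ : ↥T)
        have h4 : Mᵀ.mulVecLin w ⟨x, hx⟩ = ∑ y : ↥E, Mᵀ ⟨x, hx⟩ y * w y := rfl
        rw [h4] at h3
        simp only [Pi.zero_apply] at h3 ⊢
        rw [← h3]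
        refine Finset.sum_congr rfl fun y _ => ?_
        congr 1
        show iota f (x * (y:Γ)⁻¹) = f ((y:Γ) * x⁻¹)
        rw [iota_apply, _root_.mul_inv_rev, inv_inv]
      · simp only [Pi.zero_apply]
        refine Finset.sum_eq_zero fun y _ => ?_
        have : iota f (x * (y:Γ)⁻¹) = 0 := by
          by_contra h0
          have hmem : x * (y:Γ)⁻¹ ∈ (iota f).support := Finsupp.mem_support_iff.2 h0
          have := hT _ hmem _ y.2
          rw [inv_mul_cancel_right] at this
          exact hx this
        rw [this, zero_mul]
    have hW0 : W = 0 := hinj W hfW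
    funext y
    have h5 : W (y:Γ) = w y := by
      rw [hWdef]
      have h6 : (∑ y' : ↥E, MonoidAlgebra.single ((y':Γ)) (w y')).coeff (y:Γ)
          = ∑ y' : ↥E, (MonoidAlgebra.single ((y':Γ)) (w y')).coeff (y:Γ) := by
        rw [MonoidAlgebra.coeff_sum, Finsupp.finset_sum_apply]
      rw [h6]
      rw [Finset.sum_eq_single y]
      · simp
      · intro y' _ hne
        refine Finsupp.single_eq_of_ne' fun hc => hne (Subtype.ext hc)
      · intro h; exact absurd (Finset.mem_univ y) h
    rw [hW0] at h5
    simpa using h5.symm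
  -- Step 2: rank computations
  have hrankMt : Mᵀ.rank = E.card := by
    have h := (Mᵀ.mulVecLin).finrank_range_add_finrank_ker
    rw [hMt, finrank_bot, add_zero] at h
    rw [Matrix.rank, h, Module.finrank_pi, Fintype.card_coe]
  have hrankM : M.rank = E.card := by rw [← Matrix.rank_transpose]; exact hrankMt
  have hkerdim : E.card + finrank ℚ (LinearMap.ker M.mulVecLin) = T.card := by
    have h := (M.mulVecLin).finrank_range_add_finrank_ker
    rw [Module.finrank_pi, Fintype.card_coe] at h
    rw [← h]
    congr 1
    exact hrankM.symm
  -- Step 3: the restricted family lies in the kernel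
  set v' : Fin k → (↥T → ℚ) := fun i x => v i (x:Γ) with hv'
  have hmemker : ∀ i, v' i ∈ LinearMap.ker M.mulVecLin := by
    intro i
    rw [LinearMap.mem_ker]
    funext y
    show ∑ x : ↥T, M y x * v i (x:Γ) = 0
    have h1 : ∑ x : ↥T, M y x * v i (x:Γ) = ∑ x ∈ T, f ((y:Γ) * x⁻¹) * v i x :=
      Finset.sum_coe_sort T (fun x => f ((y:Γ) * x⁻¹) * v i x)
    rw [h1]
    have h2 : ∑ x ∈ T, f ((y:Γ) * x⁻¹) * v i x
        = ∑ x ∈ (v i).support, f ((y:Γ) * x⁻¹) * v i x := by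
      refine (Finset.sum_subset (hsupp i) fun x _ hnx => ?_).symm
      rw [Finsupp.notMem_support_iff.1 hnx, mul_zero]
    rw [h2, ← mulApplyR f (v i) (y:Γ), hker i]
    rfl
  -- Step 4: independence of the restricted family
  have hindv' : LinearIndependent ℚ v' := by
    rw [linearIndependent_iff']
    intro s c hsum j hj
    refine linearIndependent_iff'.1 hind s c ?_ j hj
    ext x
    show _ = (0 : Γ →₀ ℚ) x
    have h2 : (∑ i ∈ s, c i • v i).coeff x = ∑ i ∈ s, (c i • v i).coeff x := by
      rw [MonoidAlgebra.coeff_sum, Finsupp.finset_sum_apply]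
    rw [h2]
    simp only [Finsupp.coe_zero, Pi.zero_apply]
    by_cases hx : x ∈ T
    · have h3 := congrFun hsum (⟨x, hx⟩ : ↥T)
      simp only [Finset.sum_apply, Pi.smul_apply, Pi.zero_apply, smul_eq_mul] at h3
      rw [← h3]
      rfl
    · refine Finset.sum_eq_zero fun i _ => ?_
      have : v i x = 0 := Finsupp.notMem_support_iff.1 fun hc => hx (hsupp i hc)
      show c i * v i x = 0
      rw [this, mul_zero]
  -- Step 5: conclude
  have hindcod : LinearIndependent ℚ
      (fun i => (⟨v' i, hmemker i⟩ : ↥(LinearMap.ker M.mulVecLin))) :=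
    LinearIndependent.of_comp ((LinearMap.ker M.mulVecLin).subtype) hindv'
  have hk : k ≤ finrank ℚ (LinearMap.ker M.mulVecLin) := by
    simpa using hindcod.fintype_card_le_finrank
  omega

lemma key (F : ℕ → Finset Γ) (hF : IsFolnerSeq F) (f g : MonoidAlgebra ℚ Γ)
    (hg : g ≠ 0) (hfg : f * g = 0) :
    ∃ W : MonoidAlgebra ℚ Γ, W ≠ 0 ∧ iota f * W = 0 := by
  by_contra hcon
  push_neg at hcon
  have hinj : ∀ u : MonoidAlgebra ℚ Γ, iota f * u = 0 → u = 0 := by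
    intro u hu; by_contra h0; exact hcon u h0 hu
  obtain ⟨s₀, hs₀⟩ := Finset.nonempty_iff_ne_empty.2
    (fun h => hg (MonoidAlgebra.coeff_eq_zero.1 (Finsupp.support_eq_empty.1 h)))
  set m := g.support.card with hm
  have hm1 : 1 ≤ m := Finset.card_pos.2 ⟨s₀, hs₀⟩
  set q := (iota (R := ℚ) f).support.card with hq
  set ε : ℝ := 1 / (2 * m * (q + 1)) with hε
  have hεpos : 0 < ε := by positivity
  set G₀ : Finset Γ := (g.support.image (fun t => t * s₀⁻¹)) ∪ (iota f).support with hG₀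
  -- choose a good Følner set
  have hev : ∀ᶠ n in atTop, ∀ γ ∈ G₀,
      (((F n).image (fun δ => γ * δ) \ F n).card : ℝ) < ε * (F n).card := by
    rw [eventually_all_finset]
    intro γ _
    have h1 : ∀ᶠ n in atTop,
        (((F n).image (fun δ => γ * δ) \ F n).card : ℝ) / (F n).card < ε :=
      (hF.2 γ).eventually (gt_mem_nhds hεpos)
    filter_upwards [h1] with n hn
    have hcard : (0:ℝ) < (F n).card := by
      exact_mod_cast Finset.card_pos.2 (hF.1 n)
    calc (((F n).image (fun δ => γ * δ) \ F n).card : ℝ)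
        = (((F n).image (fun δ => γ * δ) \ F n).card : ℝ) / (F n).card * (F n).card := by
          field_simp
      _ < ε * (F n).card := by
          exact mul_lt_mul_of_pos_right hn hcard
  obtain ⟨n, hn⟩ := hev.exists
  set E := F n with hE
  have hEpos : (0:ℝ) < E.card := by exact_mod_cast Finset.card_pos.2 (hF.1 n)
  have hsmall : ∀ γ ∈ G₀, ((E.image (fun δ => γ * δ) \ E).card : ℝ) < ε * E.card := hn
  -- the enlarged set T
  set T : Finset Γ := E ∪ (iota f).support.biUnion
      (fun s => E.image (fun δ => s * δ)) with hTdef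
  have hT : ∀ s ∈ (iota (R := ℚ) f).support, ∀ y ∈ E, s * y ∈ T := by
    intro s hs y hy
    exact Finset.mem_union_right _ (Finset.mem_biUnion.2 ⟨s, hs,
      Finset.mem_image.2 ⟨y, hy, rfl⟩⟩)
  have hTcard : (T.card : ℝ) ≤ E.card + q * (ε * E.card) := by
    set B := (iota (R := ℚ) f).support.biUnion (fun s => E.image (fun δ => s * δ)) with hB
    have h1 : T = E ∪ (B \ E) := by rw [hTdef, Finset.union_sdiff_self_eq_union]
    have h2 : T.card ≤ E.card + (B \ E).card := h1 ▸ Finset.card_union_le _ _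
    have h3 : B \ E ⊆ (iota (R := ℚ) f).support.biUnion
        (fun s => E.image (fun δ => s * δ) \ E) := by
      intro x hx
      obtain ⟨hxB, hxE⟩ := Finset.mem_sdiff.1 hx
      obtain ⟨s, hs, hxs⟩ := Finset.mem_biUnion.1 hxB
      exact Finset.mem_biUnion.2 ⟨s, hs, Finset.mem_sdiff.2 ⟨hxs, hxE⟩⟩
    have h3b : (B \ E).card ≤ ∑ s ∈ (iota (R := ℚ) f).support,
        (E.image (fun δ => s * δ) \ E).card :=
      (Finset.card_le_card h3).trans Finset.card_biUnion_le
    have h4 : ((B \ E).card : ℝ) ≤ q * (ε * E.card) := by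
      calc ((B \ E).card : ℝ)
          ≤ ∑ s ∈ (iota (R := ℚ) f).support, ((E.image (fun δ => s * δ) \ E).card : ℝ) := by
            exact_mod_cast h3b
        _ ≤ ∑ _s ∈ (iota (R := ℚ) f).support, ε * E.card := by
            refine Finset.sum_le_sum fun s hs => ?_
            exact (hsmall s (Finset.mem_union_right _ hs)).le
        _ = q * (ε * E.card) := by rw [Finset.sum_const, nsmul_eq_mul]
    calc (T.card : ℝ) ≤ E.card + ((B \ E).card : ℝ) := by exact_mod_cast h2
      _ ≤ E.card + q * (ε * E.card) := by linarith
  -- the set D of good translations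
  set D : Finset Γ := (E.image (fun e => s₀⁻¹ * e)).filter
      (fun δ => ∀ t ∈ g.support, t * δ ∈ E) with hDdef
  set Bad : Finset Γ := E.filter (fun e => ∃ t ∈ g.support, t * (s₀⁻¹ * e) ∉ E) with hBad
  have hclaim1 : E.card ≤ Bad.card + D.card := by
    have hBadE : Bad ⊆ E := Finset.filter_subset _ _
    have h5 : (E \ Bad).card ≤ D.card := by
      refine Finset.card_le_card_of_injOn (fun e => s₀⁻¹ * e) ?_ ?_
      · intro e he
        obtain ⟨heE, heB⟩ := Finset.mem_sdiff.1 he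
        refine Finset.mem_filter.2 ⟨Finset.mem_image.2 ⟨e, heE, rfl⟩, ?_⟩
        intro t ht
        by_contra hcon2
        exact heB (Finset.mem_filter.2 ⟨heE, ⟨t, ht, hcon2⟩⟩)
      · intro a _ b _ hab
        exact mul_left_cancel hab
    have h6 : (E \ Bad).card + Bad.card = E.card := Finset.card_sdiff_add_card_eq_card hBadE
    omega
  have hclaim2 : (Bad.card : ℝ) ≤ m * (ε * E.card) := by
    have h7 : Bad ⊆ g.support.biUnion
        (fun t => E.filter (fun e => t * (s₀⁻¹ * e) ∉ E)) := by
      intro e he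
      obtain ⟨heE, t, ht, hte⟩ := Finset.mem_filter.1 he
      exact Finset.mem_biUnion.2 ⟨t, ht, Finset.mem_filter.2 ⟨heE, hte⟩⟩
    have h8 : ∀ t ∈ g.support, ((E.filter (fun e => t * (s₀⁻¹ * e) ∉ E)).card : ℝ)
        ≤ ε * E.card := by
      intro t ht
      have hinjcard : (E.filter (fun e => t * (s₀⁻¹ * e) ∉ E)).card
          ≤ ((E.image (fun δ => (t * s₀⁻¹) * δ)) \ E).card := by
        refine Finset.card_le_card_of_injOn (fun e => (t * s₀⁻¹) * e) ?_ ?_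
        · intro e he
          obtain ⟨heE, hte⟩ := Finset.mem_filter.1 he
          refine Finset.mem_sdiff.2 ⟨Finset.mem_image.2 ⟨e, heE, rfl⟩, ?_⟩
          simpa [mul_assoc] using hte
        · intro a _ b _ hab
          exact mul_left_cancel hab
      have hG : t * s₀⁻¹ ∈ G₀ :=
        Finset.mem_union_left _ (Finset.mem_image.2 ⟨t, ht, rfl⟩)
      calc ((E.filter (fun e => t * (s₀⁻¹ * e) ∉ E)).card : ℝ)
          ≤ (((E.image (fun δ => (t * s₀⁻¹) * δ)) \ E).card : ℝ) := by exact_mod_cast hinjcard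
        _ ≤ ε * E.card := (hsmall _ hG).le
    calc (Bad.card : ℝ) ≤ ((g.support.biUnion
          (fun t => E.filter (fun e => t * (s₀⁻¹ * e) ∉ E))).card : ℝ) := by
          exact_mod_cast Finset.card_le_card h7
      _ ≤ ∑ t ∈ g.support, ((E.filter (fun e => t * (s₀⁻¹ * e) ∉ E)).card : ℝ) := by
          exact_mod_cast Finset.card_biUnion_le
      _ ≤ ∑ _t ∈ g.support, ε * E.card := Finset.sum_le_sum h8
      _ = m * (ε * E.card) := by rw [Finset.sum_const, nsmul_eq_mul]
  -- greedy selection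
  set P : Finset Γ := g.support.image (fun t => s₀⁻¹ * t) with hP
  have h1P : (1:Γ) ∈ P := Finset.mem_image.2 ⟨s₀, hs₀, inv_mul_cancel s₀⟩
  have hPcard : P.card ≤ m := Finset.card_image_le
  obtain ⟨k, d, hcard, hmem, havoid⟩ := greedy P h1P D
  -- the kernel family
  set w : Fin k → MonoidAlgebra ℚ Γ := fun i => g * MonoidAlgebra.single (d i) (1:ℚ) with hw
  have hsuppw : ∀ i, (w i).support ⊆ E := by
    intro i x hx
    have hx0 : (g * MonoidAlgebra.single (d i) (1:ℚ)) x ≠ 0 := Finsupp.mem_support_iff.1 hx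
    rw [MonoidAlgebra.coeff_mul_single_apply, mul_one] at hx0
    have ht : x * (d i)⁻¹ ∈ g.support := Finsupp.mem_support_iff.2 hx0
    have hd := (Finset.mem_filter.1 (hmem i)).2
    have := hd _ ht
    rwa [inv_mul_cancel_right] at this
  have hkerw : ∀ i, f * w i = 0 := by
    intro i; rw [hw]; rw [← mul_assoc, hfg, zero_mul]
  have hindw : LinearIndependent ℚ w := indep g s₀ hs₀ d havoid
  have hsuppwT : ∀ i, (w i).support ⊆ T := fun i =>
    (hsuppw i).trans (hTdef ▸ Finset.subset_union_left)
  have hbound := cardBound f hinj E T hT w hsuppwT hkerw hindw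
  -- final arithmetic
  have h_a : (D.card : ℝ) ≤ (k:ℝ) * m := by
    calc (D.card : ℝ) ≤ (k * P.card : ℕ) := by exact_mod_cast hcard
      _ ≤ (k:ℝ) * m := by
        push_cast
        exact mul_le_mul_of_nonneg_left (by exact_mod_cast hPcard) (by positivity)
  have h_b : (E.card : ℝ) - m * (ε * E.card) ≤ D.card := by
    have : (E.card : ℝ) ≤ Bad.card + D.card := by exact_mod_cast hclaim1
    linarith
  have h_c : (k:ℝ) ≤ q * (ε * E.card) := by
    have : (k:ℝ) + E.card ≤ T.card := by exact_mod_cast hbound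
    linarith
  have h_d : (k:ℝ) * m ≤ (q * (ε * E.card)) * m :=
    mul_le_mul_of_nonneg_right h_c (by positivity)
  have hhalf : (m:ℝ) * ε * (1 + q) = 1/2 := by
    have hm0 : (m:ℝ) ≠ 0 := by
      simp only [ne_eq, Nat.cast_eq_zero]; omega
    have hq0 : (q:ℝ) + 1 ≠ 0 := by positivity
    rw [hε]
    field_simp
    ring
  have hmain : (E.card:ℝ) - m * (ε * E.card) ≤ (q * (ε * E.card)) * m := by linarith
  have h10 : (m:ℝ) * (ε * E.card) + (q * (ε * E.card)) * m
      = ((m:ℝ) * ε * (1 + q)) * E.card := by ring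
  have h11 : (E.card:ℝ) ≤ ((m:ℝ) * ε * (1 + q)) * E.card := by linarith
  rw [hhalf] at h11
  linarith

noncomputable def phi : MonoidAlgebra ℤ Γ →+* MonoidAlgebra ℚ Γ :=
  MonoidAlgebra.liftNCRingHom
    ((MonoidAlgebra.singleOneRingHom : ℚ →+* MonoidAlgebra ℚ Γ).comp (Int.castRingHom ℚ))
    (MonoidAlgebra.of ℚ Γ)
    (fun r x => by
      show MonoidAlgebra.single (1:Γ) ((r:ℤ):ℚ) * MonoidAlgebra.single x (1:ℚ)
          = MonoidAlgebra.single x (1:ℚ) * MonoidAlgebra.single (1:Γ) ((r:ℤ):ℚ)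
      rw [MonoidAlgebra.single_mul_single, MonoidAlgebra.single_mul_single,
        one_mul, mul_one, one_mul, mul_one])

lemma phi_single (x : Γ) (r : ℤ) :
    phi (MonoidAlgebra.single x r) = MonoidAlgebra.single x (r : ℚ) := by
  show MonoidAlgebra.liftNC _ _ (MonoidAlgebra.single x r) = _
  rw [MonoidAlgebra.liftNC_single]
  show MonoidAlgebra.single (1:Γ) ((r:ℤ) : ℚ) * MonoidAlgebra.single x (1:ℚ) = _
  rw [MonoidAlgebra.single_mul_single, one_mul, mul_one]

lemma phi_apply (u : MonoidAlgebra ℤ Γ) (x : Γ) : phi u x = (u x : ℚ) := by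
  induction u using MonoidAlgebra.induction_linear with
  | zero => simp
  | add a b ha hb =>
      rw [map_add]
      show (phi a + phi b).coeff x = _
      rw [MonoidAlgebra.coeff_add, Finsupp.add_apply, ha, hb]
      show _ = ((a + b).coeff x : ℚ)
      rw [MonoidAlgebra.coeff_add, Finsupp.add_apply]
      push_cast
      ring
  | single a b =>
      rw [phi_single]
      show (Finsupp.single a (b:ℚ)) x = ((Finsupp.single a b) x : ℚ)
      rw [Finsupp.single_apply, Finsupp.single_apply]
      split <;> simp

lemma phi_inj (u : MonoidAlgebra ℤ Γ) (h : phi u = 0) : u = 0 := by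
  ext x
  have := congrArg (fun w : MonoidAlgebra ℚ Γ => w x) h
  simp only [MonoidAlgebra.coeff_zero, Finsupp.coe_zero, Pi.zero_apply] at this
  rw [show (phi u).coeff x = (phi u) x from rfl, phi_apply] at this
  exact_mod_cast this

lemma phi_iota (u : MonoidAlgebra ℤ Γ) : phi (iota u) = iota (phi u) := by
  ext x
  show (phi (iota u)) x = (iota (phi u)) x
  rw [phi_apply, iota_apply, iota_apply, phi_apply]

lemma clear_denom (W' : MonoidAlgebra ℚ Γ) (hW' : W' ≠ 0) :
    ∃ (W : MonoidAlgebra ℤ Γ) (N : ℤ), W ≠ 0 ∧ 0 < N ∧ phi W = (N : ℚ) • W' := by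
  set N : ℤ := ∏ y ∈ W'.support, ((W' y).den : ℤ) with hN
  have hNpos : 0 < N := Finset.prod_pos fun y _ => by exact_mod_cast (W' y).den_pos
  have hdvd : ∀ y : Γ, ((W' y).den : ℤ) ∣ N := by
    intro y
    by_cases hy : y ∈ W'.support
    · exact Finset.dvd_prod_of_mem _ hy
    · rw [Finsupp.notMem_support_iff.1 hy]
      simp
  have hint : ∀ y : Γ, (((N : ℚ) * W' y).num : ℚ) = (N : ℚ) * W' y := by
    intro y
    obtain ⟨c, hc⟩ := hdvd y
    have hden : ((W' y).den : ℚ) ≠ 0 := by exact_mod_cast (W' y).den_pos.ne'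
    have h5 : W' y * ((W' y).den : ℚ) = ((W' y).num : ℚ) :=
      (eq_div_iff hden).1 (Rat.num_div_den _).symm
    have h1 : (N : ℚ) * W' y = ((c * (W' y).num : ℤ) : ℚ) := by
      rw [hc]
      push_cast
      rw [show ((W' y).den : ℚ) * (c:ℚ) * W' y = (c:ℚ) * (W' y * ((W' y).den:ℚ)) by ring, h5]
    rw [h1, Rat.num_intCast]
  refine ⟨MonoidAlgebra.ofCoeff (Finsupp.mapRange (fun q => ((N:ℚ) * q).num) (by simp) W'.coeff), N, ?_, hNpos, ?_⟩
  · obtain ⟨y, hy⟩ := Finsupp.support_nonempty_iff.2 (mt MonoidAlgebra.coeff_eq_zero.1 hW')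
    intro hcon
    have h2 := congrArg (fun w : MonoidAlgebra ℤ Γ => w y) hcon
    simp only [MonoidAlgebra.coeff_ofCoeff, MonoidAlgebra.coeff_zero, Finsupp.mapRange_apply, Finsupp.coe_zero, Pi.zero_apply] at h2
    have h3 : ((N:ℚ) * W' y) ≠ 0 :=
      mul_ne_zero (by exact_mod_cast hNpos.ne') (Finsupp.mem_support_iff.1 hy)
    have h4 := hint y
    rw [h2] at h4
    exact h3 (by simpa using h4.symm)
  · ext x
    show (phi _) x = ((N:ℚ) • W').coeff x
    rw [phi_apply, MonoidAlgebra.coeff_smul, Finsupp.smul_apply, smul_eq_mul]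
    rw [MonoidAlgebra.coeff_ofCoeff, Finsupp.mapRange_apply]
    exact hint x

lemma key_int (F : ℕ → Finset Γ) (hF : IsFolnerSeq F) (f g : MonoidAlgebra ℤ Γ)
    (hg : g ≠ 0) (hfg : f * g = 0) :
    ∃ W : MonoidAlgebra ℤ Γ, W ≠ 0 ∧ iota f * W = 0 := by
  have hg' : phi g ≠ 0 := fun h => hg (phi_inj g h)
  have hfg' : phi f * phi g = 0 := by rw [← _root_.map_mul, hfg, map_zero]
  obtain ⟨W', hW'ne, hW'⟩ := key F hF (phi f) (phi g) hg' hfg'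
  rw [← phi_iota] at hW'
  obtain ⟨W, N, hWne, hNpos, hphiW⟩ := clear_denom W' hW'ne
  refine ⟨W, hWne, ?_⟩
  apply phi_inj
  rw [_root_.map_mul, hphiW, mul_smul_comm, hW', smul_zero]

end Aux

/-- Let `Γ` be a countably infinite discrete amenable group and `f ∈ ℤΓ`.
Then `f` is a right zero-divisor in `ℤΓ` iff `f` is a left zero-divisor in `ℤΓ`. -/
theorem stmt3 (Γ : Type*) [Group Γ] [Countable Γ] [Infinite Γ]
    (amenable : ∃ F : ℕ → Finset Γ, IsFolnerSeq F) (f : MonoidAlgebra ℤ Γ) :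
    (∃ g : MonoidAlgebra ℤ Γ, g ≠ 0 ∧ g * f = 0) ↔
      (∃ g : MonoidAlgebra ℤ Γ, g ≠ 0 ∧ f * g = 0) := by
  obtain ⟨F, hF⟩ := amenable
  constructor
  · rintro ⟨g, hg, hgf⟩
    have h1 : iota f * iota g = 0 := by
      rw [← iota_mul, hgf]
      exact (iota_eq_zero_iff 0).2 rfl
    have hig : iota g ≠ 0 := fun h => hg ((iota_eq_zero_iff g).1 h)
    obtain ⟨W, hW, hfW⟩ := key_int F hF (iota f) (iota g) hig h1
    rw [iota_iota] at hfW
    exact ⟨W, hW, hfW⟩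
  · rintro ⟨g, hg, hfg⟩
    obtain ⟨W, hW, hfW⟩ := key_int F hF f g hg hfg
    refine ⟨iota W, fun h => hW ((iota_eq_zero_iff W).1 h), ?_⟩
    have h2 := congrArg (iota (R := ℤ)) hfW
    rw [iota_mul, iota_iota] at h2
    rwa [show iota (0 : MonoidAlgebra ℤ Γ) = 0 from (iota_eq_zero_iff 0).2 rfl] at h2
end

section
/- Let Γ be a group, U a unitary representation of Γ on a real or complex Hilbert space 𝓗 that does not weakly contain the trivial representation (i.e., there is a finite set F ⊂ Γ and ε > 0 such that Σ_{δ∈F} ‖v - U^δ v‖ ≥ ε‖v‖ for all v ∈ 𝓗). Then every 1-cocycle c: Γ → 𝓗 for U that is an approximate coboundary (a pointwise limit of coboundaries) is itself a coboundary. -/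
/-- Let `U` be a unitary representation of a group `Γ` on a (real or
complex) Hilbert space `𝓗` that does not weakly contain the trivial representation:
there are a finite `F ⊆ Γ` and `ε > 0` with `Σ_{δ∈F} ‖v - U^δ v‖ ≥ ε‖v‖` for all `v`.
Then every 1-cocycle `c : Γ → 𝓗` for `U` that is an approximate coboundary is a
coboundary. -/
theorem stmt10 (𝕜 : Type*) [RCLike 𝕜] (Γ : Type*) [Group Γ]
    (H : Type*) [NormedAddCommGroup H] [InnerProductSpace 𝕜 H] [CompleteSpace H]
    (U : Γ →* (H ≃ₗᵢ[𝕜] H))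
    (hU : ∃ F : Finset Γ, ∃ ε : ℝ, 0 < ε ∧
      ∀ v : H, ε * ‖v‖ ≤ ∑ δ ∈ F, ‖v - U δ v‖)
    (c : Γ → H) (hc : ∀ γ γ' : Γ, c (γ * γ') = c γ + U γ (c γ'))
    (happrox : ∃ b : ℕ → H, ∀ γ : Γ,
      Filter.Tendsto (fun n => ‖(b n - U γ (b n)) - c γ‖) Filter.atTop (nhds 0)) :
    ∃ b : H, ∀ γ : Γ, c γ = b - U γ b := by
  obtain ⟨F, ε, hε, hgap⟩ := hU
  obtain ⟨b, hb⟩ := happrox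
  set g : ℕ → ℝ := fun n => ∑ δ ∈ F, ‖(b n - U δ (b n)) - c δ‖ with hg
  have hgtend : Filter.Tendsto g Filter.atTop (nhds 0) := by
    have : Filter.Tendsto g Filter.atTop (nhds (∑ δ ∈ F, (0:ℝ))) :=
      tendsto_finset_sum F (fun δ _ => hb δ)
    simpa using this
  have key : ∀ n m : ℕ, ε * ‖b n - b m‖ ≤ g n + g m := by
    intro n m
    calc ε * ‖b n - b m‖ ≤ ∑ δ ∈ F, ‖(b n - b m) - U δ (b n - b m)‖ := hgap _
      _ ≤ ∑ δ ∈ F, (‖(b n - U δ (b n)) - c δ‖ + ‖(b m - U δ (b m)) - c δ‖) := by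
          refine Finset.sum_le_sum fun δ _ => ?_
          have : (b n - b m) - U δ (b n - b m)
              = ((b n - U δ (b n)) - c δ) - ((b m - U δ (b m)) - c δ) := by
            rw [map_sub]; abel
          rw [this]
          exact norm_sub_le _ _
      _ = g n + g m := by rw [Finset.sum_add_distrib]
  have hcauchy : CauchySeq b := by
    rw [Metric.cauchySeq_iff]
    intro η hη
    have : ∀ᶠ n in Filter.atTop, g n < ε * η / 2 :=
      hgtend.eventually_lt_const (by positivity)
    obtain ⟨N, hN⟩ := this.exists_forall_of_atTop
    refine ⟨N, fun m hm n hn => ?_⟩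
    have h1 := key m n
    have h2 : g m + g n < ε * η := by
      have := hN m hm; have := hN n hn; linarith [hN m hm, hN n hn]
    have : ε * ‖b m - b n‖ < ε * η := lt_of_le_of_lt h1 h2
    have := (mul_lt_mul_iff_right₀ hε).mp this
    simpa [dist_eq_norm] using this
  obtain ⟨L, hL⟩ := cauchySeq_tendsto_of_complete hcauchy
  refine ⟨L, fun γ => ?_⟩
  have h1 : Filter.Tendsto (fun n => b n - U γ (b n)) Filter.atTop (nhds (L - U γ L)) :=
    hL.sub (((U γ).continuous.tendsto L).comp hL)
  have h2 : Filter.Tendsto (fun n => b n - U γ (b n)) Filter.atTop (nhds (c γ)) := by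
    have := (hb γ)
    have h0 : Filter.Tendsto (fun n => (b n - U γ (b n)) - c γ) Filter.atTop (nhds 0) :=
      (tendsto_zero_iff_norm_tendsto_zero).mpr this
    have := h0.add_const (c γ)
    simpa using this
  exact tendsto_nhds_unique h2 h1
end

section
/- Let 𝓗 be a Hilbert space and Y ⊂ 𝓗 a nonempty bounded subset. Then the function v ↦ sup_{y∈Y} ‖v - y‖ attains its infimum at exactly one point of 𝓗 (the Chebyshev center of Y). -/
/-- In a Hilbert space `𝓗`, for any nonempty bounded subset `Y`, the
function `v ↦ sup_{y ∈ Y} ‖v - y‖` attains its infimum at exactly one point, the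
Chebyshev center of `Y`. -/
theorem stmt11 (𝕜 : Type*) [RCLike 𝕜]
    (H : Type*) [NormedAddCommGroup H] [InnerProductSpace 𝕜 H] [CompleteSpace H]
    (Y : Set H) (hY : Y.Nonempty) (hYb : Bornology.IsBounded Y) :
    ∃! v : H, ∀ w : H, (⨆ y : Y, ‖v - (y : H)‖) ≤ ⨆ y : Y, ‖w - (y : H)‖ := by
  haveI : Nonempty Y := hY.to_subtype
  set f : H → ℝ := fun v => ⨆ y : Y, ‖v - (y : H)‖ with hf
  obtain ⟨C, hC⟩ := (isBounded_iff_forall_norm_le).mp hYb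
  have hbdd : ∀ v : H, BddAbove (Set.range fun y : Y => ‖v - (y : H)‖) := by
    intro v
    refine ⟨‖v‖ + C, ?_⟩
    rintro _ ⟨y, rfl⟩
    calc ‖v - (y : H)‖ ≤ ‖v‖ + ‖(y : H)‖ := norm_sub_le _ _
      _ ≤ ‖v‖ + C := by linarith [hC y y.2]
  have hle : ∀ (v : H) (y : Y), ‖v - (y : H)‖ ≤ f v := fun v y => le_ciSup (hbdd v) y
  have hsup : ∀ {v : H} {a : ℝ}, (∀ y : Y, ‖v - (y : H)‖ ≤ a) → f v ≤ a :=
    fun h => ciSup_le h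
  have hpos : ∀ v : H, 0 ≤ f v := by
    intro v
    obtain ⟨y⟩ := (inferInstance : Nonempty Y)
    exact le_trans (norm_nonneg _) (hle v y)
  -- midpoint
  have two_ne : (2 : 𝕜) ≠ 0 := two_ne_zero
  have key : ∀ v w : H,
      4 * (f ((2:𝕜)⁻¹ • (v + w)))^2 + ‖v - w‖^2 ≤ 2 * (f v)^2 + 2 * (f w)^2 := by
    intro v w
    set m := (2:𝕜)⁻¹ • (v + w) with hm
    have hptwise : ∀ y : Y,
        4 * ‖m - (y : H)‖^2 + ‖v - w‖^2 = 2 * ‖v - (y:H)‖^2 + 2 * ‖w - (y:H)‖^2 := by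
      intro y
      have hpar := parallelogram_law_with_norm 𝕜 (v - (y:H)) (w - (y:H))
      have h1 : (v - (y:H)) + (w - (y:H)) = (2:𝕜) • (m - (y:H)) := by
        rw [hm, smul_sub, smul_inv_smul₀ two_ne, two_smul]
        abel
      have h2 : (v - (y:H)) - (w - (y:H)) = v - w := by abel
      rw [h1, h2, norm_smul] at hpar
      have h3 : ‖(2:𝕜)‖ = 2 := by simp
      rw [h3] at hpar
      nlinarith [hpar]
    have hrhs_nonneg : 0 ≤ (2 * (f v)^2 + 2 * (f w)^2 - ‖v - w‖^2) / 4 := by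
      obtain ⟨y⟩ := (inferInstance : Nonempty Y)
      have := hptwise y
      have h1 := hle v y
      have h2 := hle w y
      have h3 := norm_nonneg (m - (y:H))
      have hv2 : ‖v - (y:H)‖^2 ≤ (f v)^2 := pow_le_pow_left₀ (norm_nonneg _) h1 2
      have hw2 : ‖w - (y:H)‖^2 ≤ (f w)^2 := pow_le_pow_left₀ (norm_nonneg _) h2 2
      nlinarith [hpos v, hpos w]
    have hfm : f m ≤ Real.sqrt ((2 * (f v)^2 + 2 * (f w)^2 - ‖v - w‖^2) / 4) := by
      apply hsup
      intro y
      rw [show ‖m - (y:H)‖ = Real.sqrt (‖m - (y:H)‖^2) by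
        rw [Real.sqrt_sq (norm_nonneg _)]]
      apply Real.sqrt_le_sqrt
      have := hptwise y
      have h1 := hle v y
      have h2 := hle w y
      have hv2 : ‖v - (y:H)‖^2 ≤ (f v)^2 := pow_le_pow_left₀ (norm_nonneg _) h1 2
      have hw2 : ‖w - (y:H)‖^2 ≤ (f w)^2 := pow_le_pow_left₀ (norm_nonneg _) h2 2
      linarith
    have hfm2 : (f m)^2 ≤ (2 * (f v)^2 + 2 * (f w)^2 - ‖v - w‖^2) / 4 := by
      have := Real.sq_sqrt hrhs_nonneg
      nlinarith [hpos m, Real.sqrt_nonneg ((2 * (f v)^2 + 2 * (f w)^2 - ‖v - w‖^2) / 4)]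
    linarith
  -- infimum
  set r : ℝ := sInf (Set.range f) with hr
  have hbelow : BddBelow (Set.range f) := ⟨0, by rintro _ ⟨v, rfl⟩; exact hpos v⟩
  have hrle : ∀ w : H, r ≤ f w := fun w => csInf_le hbelow ⟨w, rfl⟩
  have hrange : (Set.range f).Nonempty := ⟨f 0, 0, rfl⟩
  have hrpos : 0 ≤ r := le_csInf hrange (by rintro _ ⟨v, rfl⟩; exact hpos v)
  -- minimizing sequence
  have hseq : ∀ n : ℕ, ∃ v : H, f v < r + 1 / (n + 1) := by
    intro n
    have : r < r + 1 / (n + 1) := by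
      have : (0:ℝ) < 1 / (n + 1) := by positivity
      linarith
    obtain ⟨_, ⟨v, rfl⟩, hv⟩ := exists_lt_of_csInf_lt hrange this
    exact ⟨v, hv⟩
  choose u hu using hseq
  -- Cauchy
  have hdist : ∀ n m N : ℕ, N ≤ n → N ≤ m →
      dist (u n) (u m) ≤ Real.sqrt (4 * (r + 1/(N+1))^2 - 4 * r^2) := by
    intro n m N hn hm
    have hN : (0:ℝ) < 1/(N+1) := by positivity
    have hun : f (u n) ≤ r + 1/(N+1) := by
      have h1 : (1:ℝ)/(n+1) ≤ 1/(N+1) := by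
        apply one_div_le_one_div_of_le (by positivity)
        exact_mod_cast by omega
      linarith [hu n]
    have hum : f (u m) ≤ r + 1/(N+1) := by
      have h1 : (1:ℝ)/(m+1) ≤ 1/(N+1) := by
        apply one_div_le_one_div_of_le (by positivity)
        exact_mod_cast by omega
      linarith [hu m]
    have hk := key (u n) (u m)
    have hmid := hrle ((2:𝕜)⁻¹ • (u n + u m))
    rw [dist_eq_norm]
    rw [show ‖u n - u m‖ = Real.sqrt (‖u n - u m‖^2) by rw [Real.sqrt_sq (norm_nonneg _)]]
    apply Real.sqrt_le_sqrt
    nlinarith [hpos (u n), hpos (u m)]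
  have hb0 : Filter.Tendsto (fun N : ℕ => Real.sqrt (4 * (r + 1/(N+1))^2 - 4 * r^2))
      Filter.atTop (nhds 0) := by
    have h1 : Filter.Tendsto (fun N : ℕ => (1:ℝ)/(N+1)) Filter.atTop (nhds 0) :=
      tendsto_one_div_add_atTop_nhds_zero_nat
    have h2 : Filter.Tendsto (fun N : ℕ => 4 * (r + 1/(N+1))^2 - 4 * r^2)
        Filter.atTop (nhds 0) := by
      have := (((h1.const_add r).pow 2).const_mul 4).sub_const (4 * r^2)
      simpa using this
    have := (Real.continuous_sqrt.tendsto 0).comp h2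
    simpa [Real.sqrt_zero, Function.comp_def] using this
  have hcauchy : CauchySeq u := cauchySeq_of_le_tendsto_0 _ hdist hb0
  obtain ⟨v, hv⟩ := cauchySeq_tendsto_of_complete hcauchy
  -- f is 1-Lipschitz
  have hlip : ∀ a b : H, f a ≤ f b + ‖a - b‖ := by
    intro a b
    apply hsup
    intro y
    calc ‖a - (y:H)‖ ≤ ‖b - (y:H)‖ + ‖a - b‖ := by
          have := norm_sub_le_norm_sub_add_norm_sub a b (y:H)
          linarith [norm_sub_le (a - b) (b - (y:H))]
      _ ≤ f b + ‖a - b‖ := by linarith [hle b y]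
  have hfv : f v ≤ r := by
    have htend : Filter.Tendsto (fun n : ℕ => r + 1/(n+1) + ‖v - u n‖)
        Filter.atTop (nhds r) := by
      have h1 : Filter.Tendsto (fun n : ℕ => (1:ℝ)/(n+1)) Filter.atTop (nhds 0) :=
        tendsto_one_div_add_atTop_nhds_zero_nat
      have h2 : Filter.Tendsto (fun n : ℕ => ‖v - u n‖) Filter.atTop (nhds 0) := by
        have hsub : Filter.Tendsto (fun n : ℕ => v - u n) Filter.atTop (nhds (v - v)) :=
          Filter.Tendsto.sub tendsto_const_nhds hv
        simpa using hsub.norm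
      have := (h1.const_add r).add h2
      simpa using this
    apply ge_of_tendsto htend
    filter_upwards with n
    calc f v ≤ f (u n) + ‖v - u n‖ := hlip v (u n)
      _ ≤ r + 1/(n+1) + ‖v - u n‖ := by linarith [le_of_lt (hu n)]
  refine ⟨v, fun w => le_trans hfv (hrle w), ?_⟩
  intro x hx
  have hvx : ∀ w : H, f v ≤ f w := fun w => le_trans hfv (hrle w)
  have heq : f x = f v := le_antisymm (hx v) (hvx x)
  have hk := key x v
  have hmid := hx ((2:𝕜)⁻¹ • (x + v))
  have hxv : ‖x - v‖^2 ≤ 0 := by nlinarith [hpos x, hpos ((2:𝕜)⁻¹ • (x + v))]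
  have : ‖x - v‖ = 0 := by nlinarith [norm_nonneg (x - v)]
  have := norm_sub_eq_zero_iff.mp this
  exact this
end

section
/- Let U be a unitary representation of a group Γ on a Hilbert space 𝓗 and c: Γ → 𝓗 a 1-cocycle whose image Y = {c(γ) : γ ∈ Γ} is bounded. Then c is a coboundary: c(γ) = b - U^γ b where b is the Chebyshev center of Y. -/
open Filter Topology

/-- If `U` is a unitary representation of `Γ` on a Hilbert space `𝓗` and
`c : Γ → 𝓗` is a 1-cocycle with bounded image `Y = c(Γ)`, then `c` is a coboundary
`c(γ) = b - U^γ b`, where `b` is the Chebyshev center of `Y` (the unique minimizer of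
`v ↦ sup_{y∈Y} ‖v - y‖`). -/
theorem stmt12 (𝕜 : Type*) [RCLike 𝕜] (Γ : Type*) [Group Γ]
    (H : Type*) [NormedAddCommGroup H] [InnerProductSpace 𝕜 H] [CompleteSpace H]
    (U : Γ →* (H ≃ₗᵢ[𝕜] H))
    (c : Γ → H) (hc : ∀ γ γ' : Γ, c (γ * γ') = c γ + U γ (c γ'))
    (hbdd : Bornology.IsBounded (Set.range c)) :
    ∃ b : H, (∀ γ : Γ, c γ = b - U γ b) ∧
      ∀ w : H, (⨆ y : Set.range c, ‖b - (y : H)‖) ≤ ⨆ y : Set.range c, ‖w - (y : H)‖ := by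
  classical
  obtain ⟨R, hR⟩ := hbdd.exists_norm_le
  haveI hne : Nonempty (Set.range c) := ⟨⟨c 1, 1, rfl⟩⟩
  set f : H → ℝ := fun v => ⨆ y : Set.range c, ‖v - (y : H)‖ with hfdef
  have hbdd' : ∀ v : H, BddAbove (Set.range fun y : Set.range c => ‖v - (y : H)‖) := by
    intro v
    refine ⟨‖v‖ + R, ?_⟩
    rintro x ⟨y, rfl⟩
    have := hR y y.2
    calc ‖v - (y : H)‖ ≤ ‖v‖ + ‖(y : H)‖ := norm_sub_le _ _
    _ ≤ ‖v‖ + R := by linarith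
  have hle_f : ∀ (v : H) (y : Set.range c), ‖v - (y : H)‖ ≤ f v :=
    fun v y => le_ciSup (hbdd' v) y
  have hf_le : ∀ (v : H) (M : ℝ), (∀ y : Set.range c, ‖v - (y : H)‖ ≤ M) → f v ≤ M :=
    fun v M h => ciSup_le h
  have hf_nonneg : ∀ v, 0 ≤ f v :=
    fun v => le_trans (norm_nonneg _) (hle_f v (Classical.arbitrary _))
  have hlip : ∀ v w : H, f v ≤ f w + ‖v - w‖ := by
    intro v w
    apply hf_le
    intro y
    have h1 : v - (y : H) = (w - y) + (v - w) := by abel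
    calc ‖v - (y : H)‖ ≤ ‖w - (y : H)‖ + ‖v - w‖ := by rw [h1]; exact norm_add_le _ _
    _ ≤ f w + ‖v - w‖ := by linarith [hle_f w y]
  set r : ℝ := sInf (Set.range f) with hrdef
  have hrange_ne : (Set.range f).Nonempty := ⟨f 0, 0, rfl⟩
  have hbdd_below : BddBelow (Set.range f) := ⟨0, by rintro x ⟨v, rfl⟩; exact hf_nonneg v⟩
  have hr_le : ∀ v, r ≤ f v := fun v => csInf_le hbdd_below ⟨v, rfl⟩
  have hr_nonneg : 0 ≤ r := le_csInf hrange_ne (by rintro x ⟨v, rfl⟩; exact hf_nonneg v)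
  -- key parallelogram estimate
  have key : ∀ v w : H, 4 * r ^ 2 + ‖v - w‖ ^ 2 ≤ 2 * (f v) ^ 2 + 2 * (f w) ^ 2 := by
    intro v w
    set m : H := (2 : 𝕜)⁻¹ • (v + w) with hm
    have hnorm2 : ‖(2 : 𝕜)⁻¹‖ = 2⁻¹ := by
      rw [norm_inv]
      norm_num
    have hmy : ∀ y : H, 4 * ‖m - y‖ ^ 2 + ‖v - w‖ ^ 2 = 2 * ‖v - y‖ ^ 2 + 2 * ‖w - y‖ ^ 2 := by
      intro y
      have h2 : (v - y) + (w - y) = (v + w) - (2 : 𝕜) • y := by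
        rw [two_smul]; abel
      have h3 : m - y = (2 : 𝕜)⁻¹ • ((v - y) + (w - y)) := by
        rw [h2, smul_sub, hm, inv_smul_smul₀ (two_ne_zero)]
      have h4 : ‖m - y‖ = 2⁻¹ * ‖(v - y) + (w - y)‖ := by
        rw [h3, norm_smul, hnorm2]
      have h5 := parallelogram_law_with_norm 𝕜 (v - y) (w - y)
      have h6 : (v - y) - (w - y) = v - w := by abel
      rw [h6] at h5
      rw [h4]
      nlinarith [h5, norm_nonneg ((v - y) + (w - y))]
    set A : ℝ := (2 * (f v) ^ 2 + 2 * (f w) ^ 2 - ‖v - w‖ ^ 2) / 4 with hA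
    obtain ⟨y₀⟩ := hne
    have hmyle : ∀ y : Set.range c, ‖m - (y : H)‖ ^ 2 ≤ A := by
      intro y
      have := hmy y
      have h1 := hle_f v y
      have h2 := hle_f w y
      have h3 := norm_nonneg (v - (y : H))
      have h4 := norm_nonneg (w - (y : H))
      nlinarith
    have hA_nonneg : 0 ≤ A := le_trans (sq_nonneg ‖m - (y₀ : H)‖) (hmyle y₀)
    have hfm : f m ≤ Real.sqrt A := by
      apply hf_le
      intro y
      exact Real.le_sqrt_of_sq_le (hmyle y)
    have hrA : r ≤ Real.sqrt A := le_trans (hr_le m) hfm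
    have hr2 : r ^ 2 ≤ A := by
      have := Real.sq_sqrt hA_nonneg
      nlinarith [hrA, hr_nonneg, Real.sqrt_nonneg A]
    rw [hA] at hr2
    linarith
  -- minimizing sequence
  have hseq : ∀ n : ℕ, ∃ v : H, f v < r + 1 / (n + 1) := by
    intro n
    obtain ⟨x, ⟨v, rfl⟩, hx⟩ :=
      Real.lt_sInf_add_pos hrange_ne (show (0 : ℝ) < 1 / (n + 1) by positivity)
    exact ⟨v, hx⟩
  choose v hv using hseq
  -- the sequence is Cauchy
  set bnd : ℕ → ℝ := fun N => Real.sqrt (8 * r * (1 / (N + 1)) + 4 * (1 / (N + 1)) ^ 2) with hbnd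
  have hcau : CauchySeq v := by
    apply cauchySeq_of_le_tendsto_0 bnd
    · intro n m N hn hm
      have hn' : ((N : ℝ) + 1) ≤ (n : ℝ) + 1 := by
        have : (N : ℝ) ≤ n := Nat.cast_le.mpr hn
        linarith
      have hm' : ((N : ℝ) + 1) ≤ (m : ℝ) + 1 := by
        have : (N : ℝ) ≤ m := Nat.cast_le.mpr hm
        linarith
      have hεn : (1 : ℝ) / (n + 1) ≤ 1 / (N + 1) :=
        one_div_le_one_div_of_le (by positivity) hn'
      have hεm : (1 : ℝ) / (m + 1) ≤ 1 / (N + 1) :=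
        one_div_le_one_div_of_le (by positivity) hm'
      have hεN : (0 : ℝ) < 1 / (N + 1) := by positivity
      have h1 := hv n
      have h2 := hv m
      have hk := key (v n) (v m)
      have hfn := hf_nonneg (v n)
      have hfm := hf_nonneg (v m)
      have hsq : ‖v n - v m‖ ^ 2 ≤ 8 * r * (1 / (N + 1)) + 4 * (1 / (N + 1)) ^ 2 := by
        nlinarith [hr_nonneg]
      rw [dist_eq_norm]
      exact Real.le_sqrt_of_sq_le hsq
    · have h0 : Tendsto (fun n : ℕ => 1 / ((n : ℝ) + 1)) atTop (𝓝 0) :=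
        tendsto_one_div_add_atTop_nhds_zero_nat
      have hcont : Continuous fun ε : ℝ => Real.sqrt (8 * r * ε + 4 * ε ^ 2) := by
        fun_prop
      have h1 := (hcont.tendsto 0).comp h0
      simp only [Function.comp_def] at h1
      have h2 : Real.sqrt (8 * r * 0 + 4 * 0 ^ 2) = 0 := by norm_num
      rw [h2] at h1
      exact h1.congr fun n => rfl
  obtain ⟨b, hb⟩ := cauchySeq_tendsto_of_complete hcau
  -- f b = r
  have hfb : f b = r := by
    refine le_antisymm ?_ (hr_le b)
    have hten : Tendsto (fun n : ℕ => r + 1 / ((n : ℝ) + 1) + dist (v n) b) atTop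
        (𝓝 (r + 0 + 0)) := by
      refine Tendsto.add (Tendsto.add tendsto_const_nhds
        tendsto_one_div_add_atTop_nhds_zero_nat) ?_
      have := hb.dist (tendsto_const_nhds (x := b))
      simpa using this
    rw [add_zero, add_zero] at hten
    refine ge_of_tendsto' hten fun n => ?_
    have h1 := hlip b (v n)
    have h2 := hv n
    have : ‖b - v n‖ = dist (v n) b := by rw [dist_comm, dist_eq_norm]
    linarith [h1, h2, this ▸ le_refl ‖b - v n‖, this.le]
  -- uniqueness of minimizer
  have huniq : ∀ w : H, f w ≤ r → w = b := by
    intro w hw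
    have hk := key w b
    have h1 : ‖w - b‖ ^ 2 ≤ 0 := by nlinarith [hf_nonneg w, hr_nonneg]
    have h2 : ‖w - b‖ = 0 := by nlinarith [norm_nonneg (w - b)]
    exact sub_eq_zero.mp (norm_eq_zero.mp h2)
  refine ⟨b, ?_, fun w => ?_⟩
  swap
  · show f b ≤ f w
    rw [hfb]; exact hr_le w
  intro γ
  have hTb : f (U γ b + c γ) ≤ r := by
    apply hf_le
    rintro ⟨_, γ'', rfl⟩
    have h1 : c γ'' = c γ + U γ (c (γ⁻¹ * γ'')) := by
      have := hc γ (γ⁻¹ * γ'')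
      rwa [mul_inv_cancel_left] at this
    have h2 : (U γ b + c γ) - c γ'' = U γ b - U γ (c (γ⁻¹ * γ'')) := by
      rw [h1]; abel
    calc ‖(U γ b + c γ) - c γ''‖ = ‖U γ (b - c (γ⁻¹ * γ''))‖ := by rw [h2, map_sub]
    _ = ‖b - c (γ⁻¹ * γ'')‖ := (U γ).norm_map _
    _ ≤ f b := hle_f b ⟨c (γ⁻¹ * γ''), γ⁻¹ * γ'', rfl⟩
    _ = r := hfb
  have hfix := huniq _ hTb
  rw [eq_sub_iff_add_eq, add_comm]
  exact hfix
end

section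
/- Let Γ be a countably infinite discrete group, Δ ⊆ Γ an infinite subgroup, and c: Δ → ℤΓ ⊂ ℓ²(Γ,ℝ) a 1-cocycle for the left translation action. If there exists b ∈ ℓ²(Γ,ℝ) with c(δ) = b - δ·b for all δ ∈ Δ, then b has integer coordinates, i.e., b ∈ ℓ²(Γ,ℤ) = ℤΓ, so c is a coboundary with values in ℤΓ. -/
/-- Let `Γ` be countably infinite, `Δ ⊆ Γ` an infinite subgroup, and
`c : Δ → ℤΓ ⊂ ℓ²(Γ,ℝ)` a 1-cocycle for left translation. If `b ∈ ℓ²(Γ,ℝ)` satisfies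
`c(δ) = b - δ·b` for all `δ ∈ Δ` (pointwise: `c(δ)_γ = b_γ - b_{δ⁻¹γ}`), then `b` has
integer coordinates, i.e. `b ∈ ℓ²(Γ,ℤ) = ℤΓ`. -/
theorem stmt13 (Γ : Type*) [Group Γ] [Countable Γ] [Infinite Γ]
    (Δ : Subgroup Γ) [Infinite Δ]
    (c : Δ → MonoidAlgebra ℤ Γ)
    (hc : ∀ δ δ' : Δ, c (δ * δ') = c δ + MonoidAlgebra.single (δ : Γ) (1 : ℤ) * c δ')
    (b : lp (fun _ : Γ => ℝ) 2)
    (hb : ∀ (δ : Δ) (γ : Γ), ((c δ).coeff γ : ℝ) = b γ - b ((δ : Γ)⁻¹ * γ)) :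
    ∀ γ : Γ, ∃ n : ℤ, b γ = (n : ℝ) := by
  intro γ
  -- Key: for every ε > 0 there is an integer within ε of b γ.
  have key : ∀ ε : ℝ, 0 < ε → ∃ m : ℤ, |b γ - (m : ℝ)| < ε := by
    intro ε hε
    have hmem : Memℓp (fun x : Γ => b x) 2 := lp.memℓp b
    have hsum : Summable fun x : Γ => ‖b x‖ ^ (2 : ENNReal).toReal :=
      hmem.summable (by norm_num)
    have htend := hsum.tendsto_cofinite_zero
    have hev : ∀ᶠ x in Filter.cofinite, ‖b x‖ ^ (2 : ENNReal).toReal < ε ^ 2 :=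
      htend.eventually_lt_const (by positivity)
    have hfin : {x : Γ | ¬ ‖b x‖ ^ (2 : ENNReal).toReal < ε ^ 2}.Finite := hev
    -- the map δ ↦ δ⁻¹ * γ is injective
    have hinj : Function.Injective fun δ : Δ => (δ : Γ)⁻¹ * γ := by
      intro a a' h
      simp only [mul_left_inj, inv_inj] at h
      exact Subtype.coe_injective h
    have hfin2 : {δ : Δ | ¬ ‖b ((δ : Γ)⁻¹ * γ)‖ ^ (2 : ENNReal).toReal < ε ^ 2}.Finite :=
      hfin.preimage (hinj.injOn)
    obtain ⟨δ, hδ⟩ := hfin2.infinite_compl.nonempty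
    simp only [Set.mem_compl_iff, Set.mem_setOf_eq, not_not] at hδ
    have h2 : (2 : ENNReal).toReal = (2 : ℕ) := by norm_num
    rw [h2, Real.rpow_natCast] at hδ
    have hlt : ‖b ((δ : Γ)⁻¹ * γ)‖ < ε := by
      by_contra hge
      push_neg at hge
      exact absurd hδ (not_lt.2 (by
        calc ε ^ 2 ≤ ‖b ((δ : Γ)⁻¹ * γ)‖ ^ 2 :=
          pow_le_pow_left₀ hε.le hge 2
        _ = _ := rfl))
    refine ⟨(c δ).coeff γ, ?_⟩
    have := hb δ γ
    have heq : b γ - ((c δ).coeff γ : ℝ) = b ((δ : Γ)⁻¹ * γ) := by linarith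
    rw [heq, ← Real.norm_eq_abs]
    exact hlt
  -- Conclude b γ is an integer.
  obtain ⟨m₀, hm₀⟩ := key (1/3) (by norm_num)
  refine ⟨m₀, ?_⟩
  by_contra hne
  have hd : 0 < |b γ - (m₀ : ℝ)| := by
    rw [abs_pos, sub_ne_zero]
    exact hne
  obtain ⟨m, hm⟩ := key (min |b γ - (m₀ : ℝ)| (1/3)) (lt_min hd (by norm_num))
  have hm1 : |b γ - (m : ℝ)| < 1/3 := hm.trans_le (min_le_right _ _)
  have hmm : m = m₀ := by
    have : |(m : ℝ) - (m₀ : ℝ)| < 1 := by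
      calc |(m : ℝ) - m₀| ≤ |b γ - m| + |b γ - m₀| := by
            rw [abs_sub_comm (b γ) (m : ℝ)]
            calc |(m : ℝ) - m₀| = |((m : ℝ) - b γ) + (b γ - m₀)| := by ring_nf
              _ ≤ _ := abs_add_le _ _
        _ < 1/3 + 1/3 := add_lt_add hm1 hm₀
        _ < 1 := by norm_num
    have h1 : |m - m₀| < 1 := by exact_mod_cast (by push_cast; exact this : |((m - m₀ : ℤ) : ℝ)| < 1)
    rw [abs_lt] at h1
    omega
  rw [hmm] at hm
  exact absurd (hm.trans_le (min_le_left _ _)) (lt_irrefl _)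
end

section
/- Let Γ be a countably infinite discrete group, f ∈ ℤΓ not a right zero-divisor, h ∈ ℤΓ, Δ the stabilizer of h + ℤΓf in Γ, and c: Δ → ℤΓ the cocycle defined by h - δh = c(δ)f. If Δ₀ ⊆ Δ is an infinite subgroup on which c is a coboundary (c(δ) = b - δb for some b ∈ ℤΓ and all δ ∈ Δ₀), then h = bf ∈ ℤΓf. -/
variable {Γ : Type*} [Group Γ]

/-- The stabilizer `S(h + ℤΓf) = {γ ∈ Γ : γh - h ∈ ℤΓf}` of the coset `h + ℤΓf`. -/
def stab (Γ : Type*) [Group Γ] (f h : MonoidAlgebra ℤ Γ) : Subgroup Γ where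
  carrier := {γ | ∃ g : MonoidAlgebra ℤ Γ, MonoidAlgebra.single γ (1 : ℤ) * h - h = g * f}
  one_mem' := ⟨0, by rw [← MonoidAlgebra.one_def, one_mul, sub_self, zero_mul]⟩
  mul_mem' := by
    rintro γ γ' ⟨g, hg⟩ ⟨g', hg'⟩
    refine ⟨MonoidAlgebra.single γ (1 : ℤ) * g' + g, ?_⟩
    have : MonoidAlgebra.single (γ * γ') (1 : ℤ) * h - h =
        MonoidAlgebra.single γ (1 : ℤ) * (MonoidAlgebra.single γ' (1 : ℤ) * h - h) +
          (MonoidAlgebra.single γ (1 : ℤ) * h - h) := by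
      rw [mul_sub, ← mul_assoc, MonoidAlgebra.single_mul_single]
      ring_nf
      abel
    rw [this, hg, hg', add_mul, mul_assoc]
  inv_mem' := by
    rintro γ ⟨g, hg⟩
    refine ⟨-(MonoidAlgebra.single γ⁻¹ (1 : ℤ) * g), ?_⟩
    have : MonoidAlgebra.single γ⁻¹ (1 : ℤ) * h - h =
        -(MonoidAlgebra.single γ⁻¹ (1 : ℤ) *
          (MonoidAlgebra.single γ (1 : ℤ) * h - h)) := by
      rw [mul_sub, ← mul_assoc, MonoidAlgebra.single_mul_single]
      simp [← MonoidAlgebra.one_def, neg_sub]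
    rw [this, hg, neg_mul, mul_assoc]

/-- With `Γ` countably infinite, `f ∈ ℤΓ` not a right zero-divisor,
`h ∈ ℤΓ`, `Δ` the stabilizer of `h + ℤΓf`, and `c : Δ → ℤΓ` the cocycle with
`h - δh = c(δ)f`: if `Δ₀ ⊆ Δ` is an infinite subgroup on which `c` is a coboundary,
`c(δ) = b - δb` for some `b ∈ ℤΓ`, then `h = bf ∈ ℤΓf`. -/
theorem stmt16 (Γ : Type*) [Group Γ] [Countable Γ] [Infinite Γ]
    (f : MonoidAlgebra ℤ Γ) (hf : ∀ g : MonoidAlgebra ℤ Γ, g * f = 0 → g = 0)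
    (h : MonoidAlgebra ℤ Γ)
    (c : stab Γ f h → MonoidAlgebra ℤ Γ)
    (hc : ∀ δ : stab Γ f h, h - MonoidAlgebra.single (δ : Γ) (1 : ℤ) * h = c δ * f)
    (Δ₀ : Subgroup Γ) [Infinite Δ₀] (hΔ₀ : Δ₀ ≤ stab Γ f h)
    (b : MonoidAlgebra ℤ Γ)
    (hb : ∀ δ : Γ, (hδ : δ ∈ Δ₀) → c ⟨δ, hΔ₀ hδ⟩ =
      b - MonoidAlgebra.single δ (1 : ℤ) * b) :
    h = b * f := by
  set x : MonoidAlgebra ℤ Γ := h - b * f with hx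
  have hinv : ∀ δ : Γ, δ ∈ Δ₀ → MonoidAlgebra.single δ (1 : ℤ) * x = x := by
    intro δ hδ
    have h1 := hc ⟨δ, hΔ₀ hδ⟩
    rw [hb δ hδ, sub_mul] at h1
    simp only [hx]
    rw [mul_sub, ← mul_assoc]
    have h2 : (MonoidAlgebra.single δ (1 : ℤ) * b) * f =
        b * f - (h - MonoidAlgebra.single δ (1 : ℤ) * h) := by
      rw [h1]; abel
    rw [h2]
    abel
  by_contra hne
  have hx0 : x ≠ 0 := fun h0 => hne (sub_eq_zero.mp h0)
  obtain ⟨γ, hγ⟩ := Finsupp.support_nonempty_iff.mpr (fun h0 => hx0 (MonoidAlgebra.coeff_eq_zero.mp h0))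
  have hinj : Function.Injective (fun δ : Δ₀ => ((δ : Γ) * γ : Γ)) := by
    intro a b hab
    exact Subtype.ext (mul_right_cancel hab)
  have hmem : ∀ δ : Δ₀, ((δ : Γ) * γ) ∈ x.coeff.support := by
    intro δ
    have := hinv δ δ.2
    have hval : x.coeff ((δ : Γ) * γ) = x.coeff γ := by
      conv_lhs => rw [← this]
      rw [MonoidAlgebra.coeff_single_mul_apply, inv_mul_cancel_left, one_mul]
    simp only [Finsupp.mem_support_iff, hval]
    exact Finsupp.mem_support_iff.mp hγ
  have hinf : (↑x.coeff.support : Set Γ).Infinite :=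
    Set.infinite_of_injective_forall_mem hinj (fun δ => hmem δ)
  exact hinf (x.coeff.support.finite_toSet)
end
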